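/- arXiv:2408.00186 — 2 statements merged into one kernel-verified Lean document; each statement's English description precedes it below -/
import Mathlib

section
/- For nonnegative integers n, r, x: ∑_{k=0}^{min(n,r)} q^{(k-n)(k-r)} · C_q(n, k) · C_q(r, k) · C_q(x+n+r+k, n+r) = C_q(x+n+r, n) · C_q(x+n+r, r). -/
open Finset

/-- The q-Pochhammer symbol `(a;q)_n = ∏_{j=0}^{n-1} (1 - a q^j)`. -/
noncomputable def qPoch (q a : RatFunc ℚ) (n : ℕ) : RatFunc ℚ :=
  ∏ j ∈ Finset.range n, (1 - a * q ^ j)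

/-- The Gaussian (q-binomial) coefficient `C_q(m, k)`, defined as
`(q;q)_m / ((q;q)_k (q;q)_{m-k})` for `0 ≤ k ≤ m`, and `0` otherwise. -/
noncomputable def qBinom (q : RatFunc ℚ) (m k : ℤ) : RatFunc ℚ :=
  if 0 ≤ k ∧ k ≤ m then
    qPoch q q m.toNat / (qPoch q q k.toNat * qPoch q q (m - k).toNat)
  else 0

noncomputable def P (n : ℕ) : RatFunc ℚ := qPoch RatFunc.X RatFunc.X n

lemma P_ne_zero (n : ℕ) : P n ≠ 0 := by
  unfold P qPoch
  apply Finset.prod_ne_zero_iff.2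
  intro j _
  have hp : (1 - Polynomial.X ^ (j+1) : Polynomial ℚ) ≠ 0 := by
    intro h
    rw [sub_eq_zero] at h
    have h2 := congrArg Polynomial.natDegree h
    simp [Polynomial.natDegree_X_pow] at h2
  have he : (1 : RatFunc ℚ) - RatFunc.X * RatFunc.X ^ j =
      algebraMap (Polynomial ℚ) (RatFunc ℚ) (1 - Polynomial.X ^ (j+1)) := by
    simp only [map_sub, map_one, map_pow, RatFunc.algebraMap_X]
    ring
  rw [he]
  intro h
  exact hp (RatFunc.algebraMap_injective ℚ (by simpa using h))

lemma P_succ (n : ℕ) : P (n+1) = P n * (1 - RatFunc.X ^ (n+1)) := by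
  unfold P qPoch
  rw [Finset.prod_range_succ]
  ring

noncomputable def B (a b : ℕ) : RatFunc ℚ :=
  if b ≤ a then P a / (P b * P (a - b)) else 0

lemma qBinom_natCast (a b : ℕ) : qBinom RatFunc.X (a : ℤ) (b : ℤ) = B a b := by
  unfold qBinom B
  have h1 : ((a:ℤ) - (b:ℤ)).toNat = a - b := by omega
  have h2 : ((a:ℤ)).toNat = a := by omega
  have h3 : ((b:ℤ)).toNat = b := by omega
  rw [h1, h2, h3]
  by_cases h : b ≤ a
  · rw [if_pos (by omega), if_pos h]; rfl
  · rw [if_neg (by omega), if_neg h]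

lemma B_of_lt {a b : ℕ} (h : a < b) : B a b = 0 := by
  unfold B; rw [if_neg (by omega)]

lemma B_zero (a : ℕ) : B a 0 = 1 := by
  unfold B
  rw [if_pos (Nat.zero_le a)]
  have : P 0 = 1 := by unfold P qPoch; simp
  rw [this, Nat.sub_zero, one_mul, div_self (P_ne_zero a)]

lemma B_symm {a b : ℕ} (h : b ≤ a) : B a b = B a (a - b) := by
  unfold B
  rw [if_pos h, if_pos (Nat.sub_le a b), Nat.sub_sub_self h, mul_comm]

lemma B_self (a : ℕ) : B a a = 1 := by
  unfold B
  rw [if_pos le_rfl, Nat.sub_self]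
  have : P 0 = 1 := by unfold P qPoch; simp
  rw [this, mul_one, div_self (P_ne_zero a)]

lemma pascal2 (m k : ℕ) :
    B (m+1) (k+1) = B m (k+1) + RatFunc.X ^ ((m:ℤ) - k) * B m k := by
  rcases lt_trichotomy m k with h | rfl | h
  · rw [B_of_lt (by omega), B_of_lt (by omega), B_of_lt (by omega)]
    ring
  · rw [B_self, B_self, B_of_lt (by omega), sub_self, zpow_zero]
    ring
  · obtain ⟨d, rfl⟩ : ∃ d, m = k + 1 + d := ⟨m - k - 1, by omega⟩
    have e1 : (((k:ℕ) + 1 + d : ℕ) : ℤ) - k = ((d + 1 : ℕ) : ℤ) := by push_cast; ring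
    rw [e1, zpow_natCast]
    unfold B
    rw [if_pos (by omega), if_pos (by omega), if_pos (by omega)]
    have s1 : k + 1 + d + 1 - (k + 1) = d + 1 := by omega
    have s2 : k + 1 + d - (k + 1) = d := by omega
    have s3 : k + 1 + d - k = d + 1 := by omega
    rw [s1, s2, s3]
    have p1 : P (k+1+d+1) = P (k+1+d) * (1 - RatFunc.X ^ (k+1+d+1)) := P_succ _
    have p2 : P (k+1) = P k * (1 - RatFunc.X ^ (k+1)) := P_succ _
    have p3 : P (d+1) = P d * (1 - RatFunc.X ^ (d+1)) := P_succ _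
    rw [p1, p2, p3]
    have h1 : (1 : RatFunc ℚ) - RatFunc.X ^ (k+1) ≠ 0 := by
      have := P_ne_zero (k+1); rw [p2] at this; exact right_ne_zero_of_mul this
    have h2 : (1 : RatFunc ℚ) - RatFunc.X ^ (d+1) ≠ 0 := by
      have := P_ne_zero (d+1); rw [p3] at this; exact right_ne_zero_of_mul this
    field_simp [P_ne_zero]
    ring

lemma trinomial {a k j : ℕ} (hj : j ≤ k) :
    B a k * B k j = B a j * B (a - j) (k - j) := by
  by_cases hk : k ≤ a
  · unfold B
    rw [if_pos hk, if_pos hj, if_pos (by omega), if_pos (by omega)]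
    have s1 : a - j - (k - j) = a - k := by omega
    rw [s1]
    field_simp [P_ne_zero]
  · rw [B_of_lt (by omega)]
    by_cases hja : j ≤ a
    · rw [B_of_lt (show a - j < k - j by omega)]
      ring
    · rw [B_of_lt (show a < j by omega)]
      ring

lemma V1 (b a c : ℕ) :
    B (a+b) c = ∑ j ∈ range (c+1),
      RatFunc.X ^ (((a:ℤ) - j) * ((c:ℤ) - j)) * B a j * B b (c - j) := by
  induction b generalizing c with
  | zero =>
    rw [Nat.add_zero]
    rw [Finset.sum_eq_single c]
    · rw [Nat.sub_self, B_zero, sub_self, mul_zero, zpow_zero, one_mul, mul_one]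
    · intro j hj hne
      rw [B_of_lt (show 0 < c - j by
        simp only [Finset.mem_range] at hj; omega), mul_zero]
    · intro h
      exact absurd (Finset.self_mem_range_succ c) h
  | succ b ih =>
    cases c with
    | zero =>
      simp [B_zero]
    | succ c =>
      have key : ∀ j ∈ range (c+1),
          RatFunc.X ^ (((a:ℤ) - j) * (((c:ℕ)+1:ℤ) - j)) * B a j * B (b+1) (c+1-j)
          = RatFunc.X ^ (((a:ℤ) - j) * (((c:ℕ)+1:ℤ) - j)) * B a j * B b (c+1-j)
            + RatFunc.X ^ (((a:ℤ) - j) * ((c:ℤ) - j) + ((a:ℤ) + b - c)) * B a j * B b (c-j) := by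
        intro j hj
        simp only [Finset.mem_range] at hj
        have hcj : c + 1 - j = (c - j) + 1 := by omega
        rw [hcj, pascal2 b (c-j)]
        have hc1 : ((b:ℤ) - ((c - j : ℕ) : ℤ)) = (b:ℤ) - c + j := by
          push_cast [Nat.cast_sub (by omega : j ≤ c)]; ring
        rw [hc1]
        rw [mul_add]
        congr 1
        rw [show ∀ (e1 e2 : ℤ) (u v : RatFunc ℚ),
              RatFunc.X ^ e1 * u * (RatFunc.X ^ e2 * v) = RatFunc.X ^ (e1 + e2) * u * v from
            fun e1 e2 u v => by rw [zpow_add₀ RatFunc.X_ne_zero]; ring,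
          show ((a:ℤ) - j) * (((c:ℕ)+1:ℤ) - j) + ((b:ℤ) - c + j)
              = ((a:ℤ) - j) * ((c:ℤ) - j) + ((a:ℤ) + b - c) by ring]
      push_cast
      rw [Finset.sum_range_succ, Finset.sum_congr rfl key, Finset.sum_add_distrib]
      have e2 : ∑ j ∈ range (c+1),
          RatFunc.X ^ (((a:ℤ) - j) * ((c:ℤ) - j) + ((a:ℤ) + b - c)) * B a j * B b (c-j)
          = RatFunc.X ^ ((a:ℤ) + b - c) * B (a+b) c := by
        rw [ih c, Finset.mul_sum]
        refine Finset.sum_congr rfl fun j hj => ?_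
        rw [zpow_add₀ RatFunc.X_ne_zero]
        ring
      have e1 : (∑ j ∈ range (c+1),
          RatFunc.X ^ (((a:ℤ) - j) * (((c:ℕ)+1:ℤ) - j)) * B a j * B b (c+1-j)) + B a (c+1)
          = B (a+b) (c+1) := by
        rw [ih (c+1)]
        conv_rhs => rw [Finset.sum_range_succ]
        have h2 : RatFunc.X ^ (((a:ℤ) - ((c+1:ℕ):ℤ)) * (((c+1:ℕ):ℤ) - ((c+1:ℕ):ℤ))) *
            B a (c+1) * B b (c+1-(c+1)) = B a (c+1) := by
          rw [Nat.sub_self, B_zero, mul_one, sub_self, mul_zero, zpow_zero, one_mul]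
        rw [h2, add_left_inj]
        refine Finset.sum_congr rfl fun j hj => ?_
        push_cast
        ring_nf
      have hlast : RatFunc.X ^ (((a:ℤ) - ((c+1:ℕ):ℤ)) * (((c:ℤ) + 1) - ((c+1:ℕ):ℤ))) *
          B a (c+1) * B (b+1) (c+1-(c+1)) = B a (c+1) := by
        rw [Nat.sub_self, B_zero, mul_one,
          show ((c:ℤ) + 1) - ((c+1:ℕ):ℤ) = 0 by push_cast; ring, mul_zero, zpow_zero, one_mul]
      rw [hlast, e2]
      rw [show a + (b+1) = (a+b) + 1 from rfl, pascal2 (a+b) c, ← e1,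
        show (((a+b:ℕ)):ℤ) - (c:ℤ) = (a:ℤ) + b - c by push_cast; ring]
      ring

lemma V2 (a b c : ℕ) :
    B (a+b) c = ∑ j ∈ range (c+1),
      RatFunc.X ^ ((j:ℤ) * ((b:ℤ) - c + j)) * B a j * B b (c - j) := by
  rw [add_comm a b, V1 a b c, ← Finset.sum_range_reflect]
  refine Finset.sum_congr rfl fun j hj => ?_
  simp only [Finset.mem_range] at hj
  have h1 : c + 1 - 1 - j = c - j := by omega
  have h2 : c - (c - j) = j := by omega
  have h3 : ((c - j : ℕ) : ℤ) = (c:ℤ) - j := by omega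
  rw [h1, h2, h3,
    show ((b:ℤ) - ((c:ℤ) - j)) * ((c:ℤ) - ((c:ℤ) - j)) = (j:ℤ) * ((b:ℤ) - c + j) by ring]
  ring

lemma innerSumQ (n r j : ℕ) :
    (∑ k ∈ range (r+1),
      RatFunc.X ^ (((k:ℤ)-(n:ℤ)) * ((k:ℤ)-(r:ℤ))) * B n k * B r k * B k j)
      = B n j * B (n + r - j) n := by
  by_cases hn : j ≤ n
  · by_cases hr : j ≤ r
    · rw [Finset.range_eq_Ico,
        ← Finset.sum_Ico_consecutive _ (Nat.zero_le j) (show j ≤ r+1 by omega)]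
      have hz : (∑ k ∈ Finset.Ico 0 j,
          RatFunc.X ^ (((k:ℤ)-(n:ℤ)) * ((k:ℤ)-(r:ℤ))) * B n k * B r k * B k j) = 0 := by
        refine Finset.sum_eq_zero fun k hk => ?_
        simp only [Finset.mem_Ico] at hk
        rw [B_of_lt (show k < j by omega), mul_zero]
      rw [hz, zero_add, Finset.sum_Ico_eq_sum_range,
        show r + 1 - j = (r - j) + 1 by omega]
      have hpt : ∀ t ∈ range ((r-j)+1),
          RatFunc.X ^ ((((j+t:ℕ):ℤ)-(n:ℤ)) * (((j+t:ℕ):ℤ)-(r:ℤ))) * B n (j+t) * B r (j+t)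
              * B (j+t) j
          = B n j * (RatFunc.X ^ ((((n-j:ℕ):ℤ) - t) * (((r-j:ℕ):ℤ) - t)) * B (n-j) t
              * B r ((r-j) - t)) := by
        intro t ht
        simp only [Finset.mem_range] at ht
        have htr : j + t ≤ r := by omega
        have h1 : B r (j+t) = B r ((r-j) - t) := by
          rw [B_symm htr, show r - (j+t) = (r-j) - t by omega]
        have h2 : B n (j+t) * B (j+t) j = B n j * B (n-j) t := by
          rw [trinomial (show j ≤ j+t by omega), show j + t - j = t by omega]
        have h3 : (((j+t:ℕ):ℤ)-(n:ℤ)) * (((j+t:ℕ):ℤ)-(r:ℤ))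
            = ((((n-j:ℕ)):ℤ) - t) * ((((r-j:ℕ)):ℤ) - t) := by
          have c1 : ((n-j:ℕ):ℤ) = (n:ℤ) - j := by omega
          have c2 : ((r-j:ℕ):ℤ) = (r:ℤ) - j := by omega
          push_cast [c1, c2]
          ring
        rw [h3]
        calc RatFunc.X ^ (((((n-j:ℕ)):ℤ) - t) * ((((r-j:ℕ)):ℤ) - t)) * B n (j+t) * B r (j+t)
              * B (j+t) j
            = RatFunc.X ^ (((((n-j:ℕ)):ℤ) - t) * ((((r-j:ℕ)):ℤ) - t)) *
                (B n (j+t) * B (j+t) j) * B r (j+t) := by ring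
          _ = _ := by rw [h1, h2]; ring
      rw [Finset.sum_congr rfl hpt, ← Finset.mul_sum, ← V1 r (n-j) (r-j)]
      rw [show (n-j)+r = n+r-j by omega, B_symm (show r-j ≤ n+r-j by omega),
        show n+r-j-(r-j) = n by omega]
    · rw [B_of_lt (show n + r - j < n by omega), mul_zero]
      refine Finset.sum_eq_zero fun k hk => ?_
      simp only [Finset.mem_range] at hk
      rw [B_of_lt (show k < j by omega), mul_zero]
  · rw [B_of_lt (show n < j by omega), zero_mul]
    refine Finset.sum_eq_zero fun k hk => ?_
    by_cases hkn : k ≤ n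
    · rw [B_of_lt (show k < j by omega), mul_zero]
    · rw [B_of_lt (show n < k by omega)]
      ring

theorem q_gould_symmetric (n r x : ℕ) :
    ∑ k ∈ Finset.range (min n r + 1),
      (RatFunc.X : RatFunc ℚ) ^ (((k : ℤ) - n) * ((k : ℤ) - r)) *
        qBinom RatFunc.X (n : ℤ) (k : ℤ) *
        qBinom RatFunc.X (r : ℤ) (k : ℤ) *
        qBinom RatFunc.X ((x : ℤ) + n + r + k) ((n : ℤ) + r)
    = qBinom RatFunc.X ((x : ℤ) + n + r) (n : ℤ) *
        qBinom RatFunc.X ((x : ℤ) + n + r) (r : ℤ) := by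
  have conv1 : ∀ k : ℕ, qBinom RatFunc.X ((x:ℤ) + n + r + k) ((n:ℤ) + r)
      = B (x+n+r+k) (n+r) := fun k => by
    rw [show ((x:ℤ)+n+r+k) = (((x+n+r+k:ℕ)):ℤ) by push_cast; ring,
        show ((n:ℤ)+r) = (((n+r:ℕ)):ℤ) by push_cast; ring, qBinom_natCast]
  have conv2 : qBinom RatFunc.X ((x:ℤ)+n+r) (n:ℤ) = B (x+n+r) n := by
    rw [show ((x:ℤ)+n+r) = (((x+n+r:ℕ)):ℤ) by push_cast; ring, qBinom_natCast]
  have conv3 : qBinom RatFunc.X ((x:ℤ)+n+r) (r:ℤ) = B (x+n+r) r := by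
    rw [show ((x:ℤ)+n+r) = (((x+n+r:ℕ)):ℤ) by push_cast; ring, qBinom_natCast]
  simp only [conv1, conv2, conv3, qBinom_natCast]
  -- extend the k-range to range (r+1)
  rw [Finset.sum_subset (show range (min n r + 1) ⊆ range (r+1) by
      intro k hk; simp only [Finset.mem_range] at *; omega)
    (fun k hk hk2 => by
      simp only [Finset.mem_range] at hk hk2
      rw [B_of_lt (show n < k by omega), mul_zero, zero_mul, zero_mul])]
  -- expand the big binomial by V2 and distribute
  have step2 : ∀ k ∈ range (r+1),
      RatFunc.X ^ (((k:ℤ) - n) * ((k:ℤ) - r)) * B n k * B r k * B (x+n+r+k) (n+r)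
      = ∑ j ∈ range (n+r+1),
          (RatFunc.X ^ ((j:ℤ) * ((x:ℤ) + j)) * B (x+n+r) (n+r-j))
            * (RatFunc.X ^ (((k:ℤ) - n) * ((k:ℤ) - r)) * B n k * B r k * B k j) := by
    intro k hk
    have hv2 : B (x+n+r+k) (n+r) = ∑ j ∈ range (n+r+1),
        RatFunc.X ^ ((j:ℤ) * (((x+n+r:ℕ):ℤ) - ((n+r:ℕ):ℤ) + j)) * B k j * B (x+n+r) (n+r-j)
        := by
      rw [show x+n+r+k = k+(x+n+r) by ring]
      exact V2 k (x+n+r) (n+r)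
    rw [hv2, Finset.mul_sum]
    refine Finset.sum_congr rfl fun j hj => ?_
    rw [show (((x+n+r:ℕ):ℤ) - ((n+r:ℕ):ℤ) + j) = (x:ℤ) + j by push_cast; ring]
    ring
  rw [Finset.sum_congr rfl step2, Finset.sum_comm]
  -- inner sum over k
  have step4 : ∀ j ∈ range (n+r+1),
      (∑ k ∈ range (r+1),
        (RatFunc.X ^ ((j:ℤ) * ((x:ℤ) + j)) * B (x+n+r) (n+r-j))
          * (RatFunc.X ^ (((k:ℤ) - n) * ((k:ℤ) - r)) * B n k * B r k * B k j))
      = (RatFunc.X ^ ((j:ℤ) * ((x:ℤ) + j)) * B (x+n+r) (n+r-j)) *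
          (B n j * B (n + r - j) n) := by
    intro j hj
    rw [← Finset.mul_sum, innerSumQ]
  rw [Finset.sum_congr rfl step4]
  -- shrink the j-range to range (r+1)
  rw [← Finset.sum_subset (show range (r+1) ⊆ range (n+r+1) by
      intro j hj; simp only [Finset.mem_range] at *; omega)
    (fun j hj hj2 => by
      simp only [Finset.mem_range] at hj hj2
      rw [B_of_lt (show n+r-j < n by omega), mul_zero, mul_zero])]
  -- trinomial and final V2
  have step5 : ∀ j ∈ range (r+1),
      (RatFunc.X ^ ((j:ℤ) * ((x:ℤ) + j)) * B (x+n+r) (n+r-j)) * (B n j * B (n + r - j) n)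
      = B (x+n+r) n *
          (RatFunc.X ^ ((j:ℤ) * ((x:ℤ) + j)) * B n j * B (x+r) (r-j)) := by
    intro j hj
    simp only [Finset.mem_range] at hj
    have ht : B (x+n+r) (n+r-j) * B (n+r-j) n
        = B (x+n+r) n * B (x+r) (r-j) := by
      rw [trinomial (show n ≤ n+r-j by omega), show x+n+r-n = x+r by omega,
        show n+r-j-n = r-j by omega]
    calc (RatFunc.X ^ ((j:ℤ) * ((x:ℤ) + j)) * B (x+n+r) (n+r-j)) * (B n j * B (n + r - j) n)
        = (B (x+n+r) (n+r-j) * B (n+r-j) n) * (RatFunc.X ^ ((j:ℤ) * ((x:ℤ) + j)) * B n j)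
          := by ring
      _ = _ := by rw [ht]; ring
  rw [Finset.sum_congr rfl step5, ← Finset.mul_sum]
  congr 1
  have hv2 : B (n+(x+r)) r = ∑ j ∈ range (r+1),
      RatFunc.X ^ ((j:ℤ) * (((x+r:ℕ):ℤ) - (r:ℤ) + j)) * B n j * B (x+r) (r-j) :=
    V2 n (x+r) r
  rw [show x+n+r = n+(x+r) by ring, hv2]
  refine Finset.sum_congr rfl fun j hj => ?_
  rw [show (((x+r:ℕ):ℤ) - (r:ℤ) + j) = (x:ℤ) + j by push_cast; ring]
end

section
/- For nonnegative integers a, b, c, d with d ≤ b + c: ∑_{k=max(0,d−c)}^{min(b,d)} q^{(b-k)(d-k)} · C_q(b, k) · C_q(c, d−k) · C_q(a+k, b+c) = C_q(a, b+c−d) · C_q(a−c+d, d). -/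
open Finset

local notation "q" => (RatFunc.X : RatFunc ℚ)

lemma X_ne : (RatFunc.X : RatFunc ℚ) ≠ 0 := RatFunc.X_ne_zero

lemma one_sub_X_pow_ne (t : ℕ) (ht : 1 ≤ t) : (1 : RatFunc ℚ) - q ^ t ≠ 0 := by
  intro h
  have h2 : (q ^ t : RatFunc ℚ) = 1 := by linear_combination -h
  have h3 : (algebraMap (Polynomial ℚ) (RatFunc ℚ)) (Polynomial.X ^ t) =
      (algebraMap (Polynomial ℚ) (RatFunc ℚ)) 1 := by
    rw [map_pow, map_one, RatFunc.algebraMap_X]; exact h2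
  have h4 := RatFunc.algebraMap_injective ℚ h3
  have := congrArg Polynomial.natDegree h4
  rw [Polynomial.natDegree_X_pow, Polynomial.natDegree_one] at this
  omega

lemma qPoch_succ (n : ℕ) : qPoch q q (n + 1) = qPoch q q n * (1 - q ^ (n + 1)) := by
  unfold qPoch
  rw [Finset.prod_range_succ]
  ring

lemma qPoch_zero : qPoch q q 0 = 1 := by simp [qPoch]

lemma qPoch_ne (n : ℕ) : qPoch q q n ≠ 0 := by
  unfold qPoch
  apply Finset.prod_ne_zero_iff.mpr
  intro j hj
  have h : (1 : RatFunc ℚ) - q * q ^ j = 1 - q ^ (j + 1) := by ring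
  rw [h]
  exact one_sub_X_pow_ne (j + 1) (by omega)

lemma qBinom_eq_zero {m k : ℤ} (h : ¬(0 ≤ k ∧ k ≤ m)) : qBinom q m k = 0 := if_neg h

lemma qBinom_formula (m k : ℕ) (h : k ≤ m) :
    qBinom q (m : ℤ) (k : ℤ) = qPoch q q m / (qPoch q q k * qPoch q q (m - k)) := by
  unfold qBinom
  rw [if_pos ⟨by positivity, by exact_mod_cast h⟩]
  have h1 : ((m : ℤ)).toNat = m := by omega
  have h2 : ((k : ℤ)).toNat = k := by omega
  have h3 : ((m : ℤ) - (k : ℤ)).toNat = m - k := by omega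
  rw [h1, h2, h3]

lemma qBinom_symm (m : ℕ) (k : ℤ) : qBinom q (m : ℤ) k = qBinom q (m : ℤ) ((m : ℤ) - k) := by
  by_cases h : 0 ≤ k ∧ k ≤ (m : ℤ)
  · obtain ⟨h1, h2⟩ := h
    have hk : k = ((k.toNat : ℕ) : ℤ) := by omega
    rw [hk]
    have h3 : ((m : ℤ) - (k.toNat : ℤ)) = ((m - k.toNat : ℕ) : ℤ) := by omega
    rw [h3, qBinom_formula m k.toNat (by omega), qBinom_formula m (m - k.toNat) (by omega)]
    have : m - (m - k.toNat) = k.toNat := by omega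
    rw [this, mul_comm]
  · rw [qBinom_eq_zero h, qBinom_eq_zero (by omega)]

lemma qBinom_zero_right (m : ℕ) : qBinom q (m : ℤ) 0 = 1 := by
  have h := qBinom_formula m 0 (by omega)
  simp only [Nat.cast_zero, qPoch_zero, one_mul, Nat.sub_zero] at h
  rw [h, div_self (qPoch_ne m)]

lemma qBinom_self (m : ℕ) : qBinom q (m : ℤ) (m : ℤ) = 1 := by
  have h := qBinom_formula m m le_rfl
  simp only [Nat.sub_self, qPoch_zero, mul_one] at h
  rw [h, div_self (qPoch_ne m)]

lemma pascal1 (m : ℕ) (k : ℤ) :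
    qBinom q ((m : ℤ) + 1) k = qBinom q m (k - 1) + q ^ k * qBinom q m k := by
  rcases lt_trichotomy k 0 with hk | hk | hk
  · rw [qBinom_eq_zero (by omega), qBinom_eq_zero (by omega), qBinom_eq_zero (by omega)]
    ring
  · subst hk
    have h1 : ((m : ℤ) + 1) = ((m + 1 : ℕ) : ℤ) := by push_cast; ring
    rw [h1, qBinom_zero_right (m+1),
      qBinom_eq_zero (show ¬(0 ≤ (0:ℤ)-1 ∧ (0:ℤ)-1 ≤ (m:ℤ)) by omega), qBinom_zero_right m]
    norm_num
  · by_cases hk2 : k ≤ (m : ℤ)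
    · set K := k.toNat with hK
      have hkK : k = (K : ℤ) := by omega
      have hK1 : 1 ≤ K := by omega
      have hKm : K ≤ m := by omega
      have e1 : ((m : ℤ) + 1) = ((m + 1 : ℕ) : ℤ) := by push_cast; ring
      have e2 : k - 1 = ((K - 1 : ℕ) : ℤ) := by omega
      rw [e1, e2, hkK, qBinom_formula (m+1) K (by omega),
        qBinom_formula m (K-1) (by omega), qBinom_formula m K hKm]
      have f1 : m + 1 - K = (m - K) + 1 := by omega
      have f2 : m - (K - 1) = (m - K) + 1 := by omega
      have f3 : K = (K - 1) + 1 := by omega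
      rw [f1, f2, qPoch_succ m, qPoch_succ (m - K)]
      rw [show qPoch q q K = qPoch q q ((K-1)+1) by rw [← f3], qPoch_succ (K-1)]
      rw [← f3]
      have hzk : (q:RatFunc ℚ) ^ ((K:ℤ)) = q ^ K := zpow_natCast _ _
      rw [hzk]
      have hexp : (q:RatFunc ℚ) ^ (m + 1) = q ^ K * q ^ (m - K + 1) := by
        rw [← pow_add]; congr 1; omega
      rw [hexp]
      have n1 := qPoch_ne m
      have n2 := qPoch_ne (K - 1)
      have n3 := qPoch_ne (m - K)
      have n4 := one_sub_X_pow_ne K (by omega)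
      have n5 := one_sub_X_pow_ne (m - K + 1) (by omega)
      set P := qPoch q q m
      set A := qPoch q q (K-1)
      set B := qPoch q q (m-K)
      set u := (q ^ K : RatFunc ℚ)
      set v := (q ^ (m - K + 1) : RatFunc ℚ)
      field_simp
      ring
    · by_cases hk3 : k = (m : ℤ) + 1
      · subst hk3
        have e1 : ((m : ℤ) + 1) = ((m + 1 : ℕ) : ℤ) := by push_cast; ring
        rw [e1, show ((m+1:ℕ):ℤ) - 1 = ((m:ℕ):ℤ) by push_cast; ring,
          qBinom_self (m+1), qBinom_self m,
          qBinom_eq_zero (show ¬(0 ≤ ((m+1:ℕ):ℤ) ∧ ((m+1:ℕ):ℤ) ≤ (m:ℤ)) by omega)]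
        simp
      · rw [qBinom_eq_zero (by omega), qBinom_eq_zero (by omega), qBinom_eq_zero (by omega)]
        ring

lemma trinomial_s16 (m : ℕ) (k j : ℤ) (h1 : 0 ≤ k) (h2 : k ≤ (m:ℤ)) :
    qBinom q (m:ℤ) k * qBinom q k j = qBinom q (m:ℤ) j * qBinom q ((m:ℤ) - j) (k - j) := by
  by_cases hj : 0 ≤ j ∧ j ≤ k
  · obtain ⟨hj1, hj2⟩ := hj
    set K := k.toNat; set J := j.toNat
    have hk : k = (K:ℤ) := by omega
    have hjj : j = (J:ℤ) := by omega
    have hJK : J ≤ K := by omega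
    have hKm : K ≤ m := by omega
    rw [hk, hjj,
      show ((m:ℤ) - (J:ℤ)) = ((m - J : ℕ):ℤ) by omega,
      show ((K:ℤ) - (J:ℤ)) = ((K - J : ℕ):ℤ) by omega,
      qBinom_formula m K hKm, qBinom_formula K J hJK, qBinom_formula m J (by omega),
      qBinom_formula (m - J) (K - J) (by omega)]
    rw [show m - J - (K - J) = m - K by omega]
    have n1 := qPoch_ne (m - K); have n2 := qPoch_ne J; have n3 := qPoch_ne (K - J)
    have n4 := qPoch_ne K; have n5 := qPoch_ne (m - J)
    field_simp
  · rw [qBinom_eq_zero (show ¬(0 ≤ j ∧ j ≤ k) from hj)]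
    rcases (by omega : j < 0 ∨ k < j) with h | h
    · rw [qBinom_eq_zero (show ¬(0 ≤ j ∧ j ≤ (m:ℤ)) by omega)]; ring
    · rw [qBinom_eq_zero (show ¬(0 ≤ k - j ∧ k - j ≤ (m:ℤ) - j) by omega)]; ring

lemma vandermonde (B C : ℕ) (D : ℤ) :
    ∑ i ∈ Finset.Icc (0:ℤ) (B:ℤ),
      q ^ (((B:ℤ) - i) * (D - i)) * qBinom q (B:ℤ) i * qBinom q (C:ℤ) (D - i)
    = qBinom q ((B:ℤ) + (C:ℤ)) D := by
  induction B generalizing D with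
  | zero =>
    simp only [Nat.cast_zero, Finset.Icc_self, Finset.sum_singleton, zero_sub, sub_zero,
      zero_add]
    rw [show qBinom q (0:ℤ) 0 = 1 by exact_mod_cast qBinom_zero_right 0]
    norm_num
  | succ B ih =>
    have key : ∀ i ∈ Finset.Icc (0:ℤ) ((B+1:ℕ):ℤ),
        q ^ ((((B+1:ℕ):ℤ) - i) * (D - i)) * qBinom q ((B+1:ℕ):ℤ) i * qBinom q (C:ℤ) (D - i)
        = q ^ ((((B:ℤ)+1) - i) * (D - i)) * qBinom q (B:ℤ) (i-1) * qBinom q (C:ℤ) (D - i)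
          + q ^ ((((B:ℤ)+1) - i) * (D - i) + i) * qBinom q (B:ℤ) i * qBinom q (C:ℤ) (D - i) := by
      intro i _
      rw [show ((B+1:ℕ):ℤ) = (B:ℤ)+1 by push_cast; ring, pascal1 B i,
        zpow_add₀ X_ne]
      ring
    rw [Finset.sum_congr rfl key, Finset.sum_add_distrib]
    -- first sum
    have hicc : Finset.Icc (0:ℤ) ((B+1:ℕ):ℤ) = Finset.map (addRightEmbedding 1) (Finset.Icc (-1:ℤ) (B:ℤ)) := by
      rw [Finset.map_add_right_Icc]; congr 1 <;> push_cast <;> ring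
    have s1 : ∑ i ∈ Finset.Icc (0:ℤ) ((B+1:ℕ):ℤ),
        q ^ ((((B:ℤ)+1) - i) * (D - i)) * qBinom q (B:ℤ) (i-1) * qBinom q (C:ℤ) (D - i)
        = qBinom q ((B:ℤ) + (C:ℤ)) (D - 1) := by
      rw [hicc, Finset.sum_map]
      have : ∀ x ∈ Finset.Icc (-1:ℤ) (B:ℤ),
          q ^ ((((B:ℤ)+1) - (addRightEmbedding 1 x)) * (D - (addRightEmbedding 1 x)))
            * qBinom q (B:ℤ) ((addRightEmbedding 1 x)-1) * qBinom q (C:ℤ) (D - (addRightEmbedding 1 x))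
          = q ^ (((B:ℤ) - x) * ((D-1) - x)) * qBinom q (B:ℤ) x * qBinom q (C:ℤ) ((D-1) - x) := by
        intro x _
        simp only [addRightEmbedding_apply]
        rw [show (B:ℤ)+1 - (x+1) = (B:ℤ) - x by ring, show D - (x+1) = (D-1) - x by ring,
          show x + 1 - 1 = x by ring]
      rw [Finset.sum_congr rfl this]
      rw [show Finset.Icc (-1:ℤ) (B:ℤ) = insert (-1) (Finset.Icc (0:ℤ) (B:ℤ)) by
        ext x; simp [Finset.mem_Icc, Finset.mem_insert]; omega]
      rw [Finset.sum_insert (by simp)]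
      rw [qBinom_eq_zero (show ¬(0 ≤ (-1:ℤ) ∧ (-1:ℤ) ≤ (B:ℤ)) by omega)]
      rw [ih (D-1)]
      ring
    have s2 : ∑ i ∈ Finset.Icc (0:ℤ) ((B+1:ℕ):ℤ),
        q ^ ((((B:ℤ)+1) - i) * (D - i) + i) * qBinom q (B:ℤ) i * qBinom q (C:ℤ) (D - i)
        = q ^ D * qBinom q ((B:ℤ) + (C:ℤ)) D := by
      rw [show Finset.Icc (0:ℤ) ((B+1:ℕ):ℤ) = insert ((B:ℤ)+1) (Finset.Icc (0:ℤ) (B:ℤ)) by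
        ext x; simp [Finset.mem_Icc, Finset.mem_insert]; omega]
      rw [Finset.sum_insert (by simp)]
      rw [qBinom_eq_zero (show ¬(0 ≤ (B:ℤ)+1 ∧ (B:ℤ)+1 ≤ (B:ℤ)) by omega)]
      have : ∀ i ∈ Finset.Icc (0:ℤ) (B:ℤ),
          q ^ ((((B:ℤ)+1) - i) * (D - i) + i) * qBinom q (B:ℤ) i * qBinom q (C:ℤ) (D - i)
          = q ^ D * (q ^ (((B:ℤ) - i) * (D - i)) * qBinom q (B:ℤ) i * qBinom q (C:ℤ) (D - i)) := by
        intro i _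
        rw [show (((B:ℤ)+1) - i) * (D - i) + i = D + (((B:ℤ) - i) * (D - i)) by ring,
          zpow_add₀ X_ne]
        ring
      rw [Finset.sum_congr rfl this, ← Finset.mul_sum, ih D]
      ring
    rw [s1, s2]
    have := pascal1 (B + C) D
    rw [show (((B+C:ℕ)):ℤ) = (B:ℤ) + (C:ℤ) by push_cast; ring] at this
    rw [show ((B+1:ℕ):ℤ) + (C:ℤ) = ((B:ℤ) + (C:ℤ)) + 1 by push_cast; ring, this]

lemma sum_nat_int (n1 n2 : ℕ) (g : ℤ → RatFunc ℚ) :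
    ∑ k ∈ Finset.Icc n1 n2, g (k:ℤ) = ∑ k ∈ Finset.Icc (n1:ℤ) (n2:ℤ), g k := by
  refine Finset.sum_nbij' (fun k => (k:ℤ)) (fun k => k.toNat) ?_ ?_ ?_ ?_ (fun _ _ => rfl) <;>
    (intro x hx; simp only [Finset.mem_Icc] at *; omega)

theorem q_bizley_two (a b c d : ℕ) (hd : d ≤ b + c) :
    ∑ k ∈ Finset.Icc (d - c) (min b d),
      (RatFunc.X : RatFunc ℚ) ^ (((b : ℤ) - k) * ((d : ℤ) - k)) *
        qBinom RatFunc.X (b : ℤ) (k : ℤ) *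
        qBinom RatFunc.X (c : ℤ) ((d : ℤ) - k) *
        qBinom RatFunc.X ((a : ℤ) + k) ((b : ℤ) + c)
    = qBinom RatFunc.X (a : ℤ) ((b : ℤ) + c - d) *
        qBinom RatFunc.X ((a : ℤ) - c + d) (d : ℤ) := by
  -- Step 0 : change index set to Icc (0:ℤ) b
  rw [sum_nat_int (d - c) (min b d) (fun k =>
    q ^ (((b : ℤ) - k) * ((d : ℤ) - k)) * qBinom q (b : ℤ) k *
    qBinom q (c : ℤ) ((d : ℤ) - k) * qBinom q ((a : ℤ) + k) ((b : ℤ) + c))]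
  rw [Finset.sum_subset (Finset.Icc_subset_Icc (by omega) (by omega) :
      Finset.Icc ((d - c : ℕ):ℤ) ((min b d : ℕ):ℤ) ⊆ Finset.Icc (0:ℤ) (b:ℤ))
    (by
      intro x hx hx2
      simp only [Finset.mem_Icc] at hx hx2
      rw [qBinom_eq_zero (show ¬(0 ≤ (d:ℤ) - x ∧ (d:ℤ) - x ≤ (c:ℤ)) by omega)]
      ring)]
  -- Step 1 : expand the last factor by Vandermonde
  have step1 : ∀ k ∈ Finset.Icc (0:ℤ) (b:ℤ),
      qBinom q ((a : ℤ) + k) ((b : ℤ) + c)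
      = ∑ j ∈ Finset.Icc (0:ℤ) (a:ℤ),
          q ^ (((a:ℤ) - j) * (((b:ℤ) + c) - j)) * qBinom q (a:ℤ) j *
            qBinom q k (((b:ℤ) + c) - j) := by
    intro k hk
    simp only [Finset.mem_Icc] at hk
    have h := vandermonde a k.toNat ((b:ℤ) + c)
    rw [Int.toNat_of_nonneg hk.1] at h
    exact h.symm
  calc
    ∑ k ∈ Finset.Icc (0:ℤ) (b:ℤ),
        q ^ (((b : ℤ) - k) * ((d : ℤ) - k)) * qBinom q (b : ℤ) k *
          qBinom q (c : ℤ) ((d : ℤ) - k) * qBinom q ((a : ℤ) + k) ((b : ℤ) + c)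
      = ∑ k ∈ Finset.Icc (0:ℤ) (b:ℤ), ∑ j ∈ Finset.Icc (0:ℤ) (a:ℤ),
          q ^ (((b : ℤ) - k) * ((d : ℤ) - k)) * qBinom q (b : ℤ) k *
          qBinom q (c : ℤ) ((d : ℤ) - k) *
          (q ^ (((a:ℤ) - j) * (((b:ℤ) + c) - j)) * qBinom q (a:ℤ) j *
            qBinom q k (((b:ℤ) + c) - j)) := by
        refine Finset.sum_congr rfl fun k hk => ?_
        rw [step1 k hk, Finset.mul_sum]
    _ = ∑ j ∈ Finset.Icc (0:ℤ) (a:ℤ), ∑ k ∈ Finset.Icc (0:ℤ) (b:ℤ),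
          q ^ (((b : ℤ) - k) * ((d : ℤ) - k)) * qBinom q (b : ℤ) k *
          qBinom q (c : ℤ) ((d : ℤ) - k) *
          (q ^ (((a:ℤ) - j) * (((b:ℤ) + c) - j)) * qBinom q (a:ℤ) j *
            qBinom q k (((b:ℤ) + c) - j)) := Finset.sum_comm
    _ = ∑ j ∈ Finset.Icc (0:ℤ) (a:ℤ),
          q ^ (((a:ℤ) - j) * (((b:ℤ) + c) - j)) * qBinom q (a:ℤ) j *
          qBinom q (b:ℤ) (((b:ℤ) + c) - j) * qBinom q j (((b:ℤ) + c) - (d:ℤ)) := by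
        refine Finset.sum_congr rfl fun j hj => ?_
        simp only [Finset.mem_Icc] at hj
        by_cases hjc : j < (c:ℤ)
        · -- every term vanishes, and so does the target
          rw [qBinom_eq_zero (show ¬(0 ≤ ((b:ℤ)+c) - j ∧ ((b:ℤ)+c) - j ≤ (b:ℤ)) by omega)]
          rw [Finset.sum_eq_zero, mul_zero, zero_mul]
          intro k hk
          simp only [Finset.mem_Icc] at hk
          rw [qBinom_eq_zero (show ¬(0 ≤ ((b:ℤ)+c) - j ∧ ((b:ℤ)+c) - j ≤ k) by omega)]
          ring
        · by_cases hjbc : (b:ℤ) + c < j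
          · rw [qBinom_eq_zero (show ¬(0 ≤ ((b:ℤ)+c) - j ∧ ((b:ℤ)+c) - j ≤ (b:ℤ)) by omega)]
            rw [Finset.sum_eq_zero, mul_zero, zero_mul]
            intro k hk
            simp only [Finset.mem_Icc] at hk
            rw [qBinom_eq_zero (show ¬(0 ≤ ((b:ℤ)+c) - j ∧ ((b:ℤ)+c) - j ≤ k) by omega)]
            ring
          · -- main case : c ≤ j ≤ b + c
            push_neg at hjc hjbc
            -- apply trinomial inside each term
            have tstep : ∀ k ∈ Finset.Icc (0:ℤ) (b:ℤ),
                q ^ (((b : ℤ) - k) * ((d : ℤ) - k)) * qBinom q (b : ℤ) k *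
                qBinom q (c : ℤ) ((d : ℤ) - k) *
                (q ^ (((a:ℤ) - j) * (((b:ℤ) + c) - j)) * qBinom q (a:ℤ) j *
                  qBinom q k (((b:ℤ) + c) - j))
                = (q ^ (((a:ℤ) - j) * (((b:ℤ) + c) - j)) * qBinom q (a:ℤ) j *
                    qBinom q (b:ℤ) (((b:ℤ) + c) - j)) *
                  (q ^ (((b : ℤ) - k) * ((d : ℤ) - k)) *
                    qBinom q (j - (c:ℤ)) (k - (((b:ℤ) + c) - j)) *
                    qBinom q (c : ℤ) ((d : ℤ) - k)) := by
              intro k hk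
              simp only [Finset.mem_Icc] at hk
              have tri := trinomial_s16 b k (((b:ℤ) + c) - j) hk.1 hk.2
              rw [show (b:ℤ) - (((b:ℤ) + c) - j) = j - (c:ℤ) by ring] at tri
              linear_combination (q ^ (((b : ℤ) - k) * ((d : ℤ) - k)) *
                qBinom q (c : ℤ) ((d : ℤ) - k) *
                q ^ (((a:ℤ) - j) * (((b:ℤ) + c) - j)) * qBinom q (a:ℤ) j) * tri
            rw [Finset.sum_congr rfl tstep, ← Finset.mul_sum]
            -- now the inner sum is a Vandermonde after reindexing
            have hre : Finset.Icc (0:ℤ) (b:ℤ)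
                = Finset.map (addRightEmbedding ((b:ℤ) + c - j))
                    (Finset.Icc (j - (b:ℤ) - c) (j - (c:ℤ))) := by
              rw [Finset.map_add_right_Icc]; congr 1 <;> ring
            rw [hre, Finset.sum_map]
            have hterm : ∀ x ∈ Finset.Icc (j - (b:ℤ) - c) (j - (c:ℤ)),
                q ^ (((b:ℤ) - (addRightEmbedding ((b:ℤ) + c - j) x)) *
                    ((d:ℤ) - (addRightEmbedding ((b:ℤ) + c - j) x))) *
                  qBinom q (j - (c:ℤ))
                    ((addRightEmbedding ((b:ℤ) + c - j) x) - (((b:ℤ) + c) - j)) *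
                  qBinom q (c : ℤ) ((d:ℤ) - (addRightEmbedding ((b:ℤ) + c - j) x))
                = q ^ (((j - (c:ℤ)) - x) * (((d:ℤ) - b - c + j) - x)) *
                  qBinom q (j - (c:ℤ)) x *
                  qBinom q (c:ℤ) (((d:ℤ) - b - c + j) - x) := by
              intro x _
              simp only [addRightEmbedding_apply]
              rw [show (b:ℤ) - (x + ((b:ℤ) + c - j)) = (j - (c:ℤ)) - x by ring,
                show (d:ℤ) - (x + ((b:ℤ) + c - j)) = ((d:ℤ) - b - c + j) - x by ring,
                show x + ((b:ℤ) + c - j) - (((b:ℤ) + c) - j) = x by ring]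
            rw [Finset.sum_congr rfl hterm]
            rw [← Finset.sum_subset (Finset.Icc_subset_Icc (by omega) le_rfl :
                Finset.Icc (0:ℤ) (j - (c:ℤ)) ⊆ Finset.Icc (j - (b:ℤ) - c) (j - (c:ℤ)))
              (by
                intro x hx hx2
                simp only [Finset.mem_Icc] at hx hx2
                rw [qBinom_eq_zero (show ¬(0 ≤ x ∧ x ≤ j - (c:ℤ)) by omega)]
                ring)]
            have hv := vandermonde (j - (c:ℤ)).toNat c ((d:ℤ) - b - c + j)
            rw [Int.toNat_of_nonneg (by omega : (0:ℤ) ≤ j - (c:ℤ))] at hv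
            rw [hv, show j - (c:ℤ) + (c:ℤ) = j by ring]
            -- symmetry
            have hsym := qBinom_symm j.toNat ((d:ℤ) - b - c + j)
            rw [Int.toNat_of_nonneg hj.1] at hsym
            rw [show j - ((d:ℤ) - b - c + j) = ((b:ℤ) + c) - (d:ℤ) by ring] at hsym
            rw [hsym]
    _ = qBinom q (a : ℤ) ((b : ℤ) + c - d) * qBinom q ((a : ℤ) - c + d) (d : ℤ) := by
        -- trinomial again, then final Vandermonde
        have tstep : ∀ j ∈ Finset.Icc (0:ℤ) (a:ℤ),
            q ^ (((a:ℤ) - j) * (((b:ℤ) + c) - j)) * qBinom q (a:ℤ) j *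
              qBinom q (b:ℤ) (((b:ℤ) + c) - j) * qBinom q j (((b:ℤ) + c) - (d:ℤ))
            = qBinom q (a:ℤ) (((b:ℤ) + c) - (d:ℤ)) *
              (q ^ (((a:ℤ) - j) * (((b:ℤ) + c) - j)) *
                qBinom q ((a:ℤ) - ((b:ℤ) + c) + d) (j - (((b:ℤ) + c) - (d:ℤ))) *
                qBinom q (b:ℤ) (((b:ℤ) + c) - j)) := by
          intro j hj
          simp only [Finset.mem_Icc] at hj
          have tri := trinomial_s16 a j (((b:ℤ) + c) - (d:ℤ)) hj.1 hj.2
          rw [show (a:ℤ) - (((b:ℤ) + c) - (d:ℤ)) = (a:ℤ) - ((b:ℤ) + c) + d by ring] at tri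
          linear_combination (q ^ (((a:ℤ) - j) * (((b:ℤ) + c) - j)) *
            qBinom q (b:ℤ) (((b:ℤ) + c) - j)) * tri
        rw [Finset.sum_congr rfl tstep, ← Finset.mul_sum]
        by_cases hA : (a:ℤ) - ((b:ℤ) + c) + d < 0
        · rw [qBinom_eq_zero (show ¬(0 ≤ ((b:ℤ) + c) - (d:ℤ) ∧ ((b:ℤ) + c) - (d:ℤ) ≤ (a:ℤ)) by omega)]
          ring
        · push_neg at hA
          congr 1
          have hre : Finset.Icc (0:ℤ) (a:ℤ)
              = Finset.map (addRightEmbedding ((b:ℤ) + c - d))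
                  (Finset.Icc ((d:ℤ) - b - c) ((a:ℤ) - ((b:ℤ) + c) + d)) := by
            rw [Finset.map_add_right_Icc]; congr 1 <;> ring
          rw [hre, Finset.sum_map]
          have hterm : ∀ x ∈ Finset.Icc ((d:ℤ) - b - c) ((a:ℤ) - ((b:ℤ) + c) + d),
              q ^ (((a:ℤ) - (addRightEmbedding ((b:ℤ) + c - d) x)) *
                  (((b:ℤ) + c) - (addRightEmbedding ((b:ℤ) + c - d) x))) *
                qBinom q ((a:ℤ) - ((b:ℤ) + c) + d)
                  ((addRightEmbedding ((b:ℤ) + c - d) x) - (((b:ℤ) + c) - (d:ℤ))) *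
                qBinom q (b:ℤ) (((b:ℤ) + c) - (addRightEmbedding ((b:ℤ) + c - d) x))
              = q ^ ((((a:ℤ) - ((b:ℤ) + c) + d) - x) * ((d:ℤ) - x)) *
                qBinom q ((a:ℤ) - ((b:ℤ) + c) + d) x *
                qBinom q (b:ℤ) ((d:ℤ) - x) := by
            intro x _
            simp only [addRightEmbedding_apply]
            rw [show (a:ℤ) - (x + ((b:ℤ) + c - d)) = (((a:ℤ) - ((b:ℤ) + c) + d) - x) by ring,
              show ((b:ℤ) + c) - (x + ((b:ℤ) + c - d)) = (d:ℤ) - x by ring,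
              show x + ((b:ℤ) + c - d) - (((b:ℤ) + c) - (d:ℤ)) = x by ring]
          rw [Finset.sum_congr rfl hterm]
          rw [← Finset.sum_subset (Finset.Icc_subset_Icc (by omega) le_rfl :
              Finset.Icc (0:ℤ) ((a:ℤ) - ((b:ℤ) + c) + d)
                ⊆ Finset.Icc ((d:ℤ) - b - c) ((a:ℤ) - ((b:ℤ) + c) + d))
            (by
              intro x hx hx2
              simp only [Finset.mem_Icc] at hx hx2
              rw [qBinom_eq_zero (show ¬(0 ≤ x ∧ x ≤ (a:ℤ) - ((b:ℤ) + c) + d) by omega)]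
              ring)]
          have hv := vandermonde ((a:ℤ) - ((b:ℤ) + c) + d).toNat b (d:ℤ)
          rw [Int.toNat_of_nonneg hA] at hv
          rw [hv, show (a:ℤ) - ((b:ℤ) + c) + d + (b:ℤ) = (a:ℤ) - c + d by ring]
end
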